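/- Triangle inequality for d_proj: If the cost function C is antipodally symmetric, then for all classes [p₀], [p₁], [p₂] in the projective line bundle one has d_proj([p₀],[p₁]) ≤ d_proj([p₀],[p₂]) + d_proj([p₂],[p₁]). -/

import Mathlib

open Set MeasureTheory
open scoped ENNReal

noncomputable section

/-- The orientation vector `n(θ) = (cos θ, sin θ)`. -/
def nvec (θ : ℝ) : ℝ × ℝ := (Real.cos θ, Real.sin θ)

/-- Euclidean dot product on `ℝ × ℝ`. -/
def dot (a b : ℝ × ℝ) : ℝ := a.1 * b.1 + a.2 * b.2

/-- Euclidean norm on `ℝ × ℝ`. -/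
def enorm2 (v : ℝ × ℝ) : ℝ := Real.sqrt (v.1 ^ 2 + v.2 ^ 2)

/-- A point of the space of positions and orientations: a position in `ℝ²`
together with an orientation vector in `ℝ²` (intended to be a unit vector). -/
abbrev Pt := (ℝ × ℝ) × (ℝ × ℝ)

/-- The antipode `p̄ = (x, -n)` of a point `p = (x, n)`. -/
def antipode (p : Pt) : Pt := (p.1, -p.2)

/-- A candidate curve, given by a spatial part `x` and an angular part `θ`. -/
structure Curve where
  x : ℝ → ℝ × ℝ
  th : ℝ → ℝ

/-- A map is piecewise continuously differentiable on `[0,1]`: it is continuous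
on `[0,1]` and, off a finite set, differentiable with continuous derivative. -/
def PiecewiseC1 {E : Type*} [NormedAddCommGroup E] [NormedSpace ℝ E] (f : ℝ → E) : Prop :=
  ContinuousOn f (Icc 0 1) ∧
    ∃ s : Finset ℝ, ∀ t ∈ Icc (0 : ℝ) 1 \ (s : Set ℝ),
      DifferentiableAt ℝ f t ∧ ContinuousAt (deriv f) t

namespace Curve

/-- Both components of the curve are piecewise `C¹`. -/
def Admissible (γ : Curve) : Prop := PiecewiseC1 γ.x ∧ PiecewiseC1 γ.th

/-- The spatial control `u¹(t) = ẋ(t) ⬝ n(θ(t))`. -/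
def u1 (γ : Curve) (t : ℝ) : ℝ := dot (deriv γ.x t) (nvec (γ.th t))

/-- The angular control `u³(t) = θ̇(t)`. -/
def u3 (γ : Curve) (t : ℝ) : ℝ := deriv γ.th t

/-- Horizontality: wherever the spatial derivative exists,
`ẋ(t) ∈ span {n(θ(t))}`. -/
def Horizontal (γ : Curve) : Prop :=
  ∀ t ∈ Icc (0 : ℝ) 1, DifferentiableAt ℝ γ.x t →
    ∃ c : ℝ, deriv γ.x t = c • nvec (γ.th t)

/-- Boundary conditions: the curve joins `p₀` to `p₁` (the angular boundary
conditions hold modulo `2π`, which is expressed via the orientation vectors). -/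
def Joins (γ : Curve) (p₀ p₁ : Pt) : Prop :=
  γ.x 0 = p₀.1 ∧ γ.x 1 = p₁.1 ∧ nvec (γ.th 0) = p₀.2 ∧ nvec (γ.th 1) = p₁.2

end Curve

/-- The length `L(γ) = ∫₀¹ C(x(t), n(θ(t))) √(ξ² u¹(t)² + u³(t)²) dt`. -/
def length (ξ : ℝ) (C : Pt → ℝ) (γ : Curve) : ℝ :=
  ∫ t in (0 : ℝ)..1,
    C (γ.x t, nvec (γ.th t)) * Real.sqrt (ξ ^ 2 * γ.u1 t ^ 2 + γ.u3 t ^ 2)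

/-- `Γ₀(p₀,p₁)`: horizontal admissible candidate curves from `p₀` to `p₁`. -/
def Gamma0 (p₀ p₁ : Pt) : Set Curve :=
  {γ | γ.Admissible ∧ γ.Horizontal ∧ γ.Joins p₀ p₁}

/-- `Γ₀⁺(p₀,p₁)`: members of `Γ₀(p₀,p₁)` with `u¹ ≥ 0` wherever defined. -/
def Gamma0plus (p₀ p₁ : Pt) : Set Curve :=
  {γ ∈ Gamma0 p₀ p₁ | ∀ t ∈ Icc (0 : ℝ) 1, DifferentiableAt ℝ γ.x t → 0 ≤ γ.u1 t}

/-- `Γ₀⁻(p₀,p₁)`: members of `Γ₀(p₀,p₁)` with `u¹ ≤ 0` wherever defined. -/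
def Gamma0minus (p₀ p₁ : Pt) : Set Curve :=
  {γ ∈ Gamma0 p₀ p₁ | ∀ t ∈ Icc (0 : ℝ) 1, DifferentiableAt ℝ γ.x t → γ.u1 t ≤ 0}

/-- The sub-Riemannian distance `d_F₀` (with `inf ∅ = +∞`). -/
def dF0 (ξ : ℝ) (C : Pt → ℝ) (p₀ p₁ : Pt) : ℝ≥0∞ :=
  ⨅ γ ∈ Gamma0 p₀ p₁, ENNReal.ofReal (length ξ C γ)

/-- The forward (asymmetric) Finsler distance `d_F₀⁺` (with `inf ∅ = +∞`). -/
def dF0plus (ξ : ℝ) (C : Pt → ℝ) (p₀ p₁ : Pt) : ℝ≥0∞ :=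
  ⨅ γ ∈ Gamma0plus p₀ p₁, ENNReal.ofReal (length ξ C γ)

/-- The backward Finsler distance `d_F₀⁻` (with `inf ∅ = +∞`). -/
def dF0minus (ξ : ℝ) (C : Pt → ℝ) (p₀ p₁ : Pt) : ℝ≥0∞ :=
  ⨅ γ ∈ Gamma0minus p₀ p₁, ENNReal.ofReal (length ξ C γ)

/-- The cusp-free model `d_c` on the projective line bundle:
the minimum of `d_F₀⁺` over representatives `q₀ ∈ [p₀] = {p₀, p̄₀}` and
`q₁ ∈ [p₁] = {p₁, p̄₁}`. -/
def dc (ξ : ℝ) (C : Pt → ℝ) (p₀ p₁ : Pt) : ℝ≥0∞ :=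
  min (min (dF0plus ξ C p₀ p₁) (dF0plus ξ C p₀ (antipode p₁)))
      (min (dF0plus ξ C (antipode p₀) p₁) (dF0plus ξ C (antipode p₀) (antipode p₁)))

/-- The projective line bundle model `d_proj`:
the minimum of `d_F₀` over representatives of the classes. -/
def dproj (ξ : ℝ) (C : Pt → ℝ) (p₀ p₁ : Pt) : ℝ≥0∞ :=
  min (min (dF0 ξ C p₀ p₁) (dF0 ξ C p₀ (antipode p₁)))
      (min (dF0 ξ C (antipode p₀) p₁) (dF0 ξ C (antipode p₀) (antipode p₁)))

/-- `Γᶜ([p₀],[p₁])`: curves between representatives of the two classes whose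
spatial control has a constant sign (nonnegative or nonpositive everywhere). -/
def GammaC (p₀ p₁ : Pt) : Set Curve :=
  (Gamma0plus p₀ p₁ ∪ Gamma0minus p₀ p₁) ∪
  (Gamma0plus p₀ (antipode p₁) ∪ Gamma0minus p₀ (antipode p₁)) ∪
  (Gamma0plus (antipode p₀) p₁ ∪ Gamma0minus (antipode p₀) p₁) ∪
  (Gamma0plus (antipode p₀) (antipode p₁) ∪ Gamma0minus (antipode p₀) (antipode p₁))

/-- The cost function `C` is antipodally symmetric. -/
def AntipodallySymmetric (C : Pt → ℝ) : Prop :=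
  ∀ x n : ℝ × ℝ, C (x, n) = C (x, -n)

/-- Distance on the circle: `ρ(θ₀, θ₁) = min_{k ∈ ℤ} |θ₁ - θ₀ + 2πk|`. -/
def rho (θ₀ θ₁ : ℝ) : ℝ :=
  sInf (Set.range fun k : ℤ => |θ₁ - θ₀ + 2 * Real.pi * k|)

section Helpers

lemma sqrt_nine : Real.sqrt 9 = 3 := by
  rw [show (9:ℝ) = 3^2 by norm_num, Real.sqrt_sq (by norm_num : (0:ℝ) ≤ 3)]

lemma nvec_add_int (θ : ℝ) (k : ℤ) : nvec (θ + 2*Real.pi*k) = nvec θ := by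
  unfold nvec
  rw [show θ + 2*Real.pi*k = θ + k*(2*Real.pi) by ring]
  rw [Real.cos_add_int_mul_two_pi, Real.sin_add_int_mul_two_pi]

lemma nvec_eq_iff {a b : ℝ} (h : nvec a = nvec b) : ∃ k : ℤ, a = b + 2*Real.pi*k := by
  have h1 : Real.cos a = Real.cos b := congrArg Prod.fst h
  have h2 : Real.sin a = Real.sin b := congrArg Prod.snd h
  obtain ⟨k, hk⟩ := Real.Angle.angle_eq_iff_two_pi_dvd_sub.mp (Real.Angle.cos_sin_inj h1 h2)
  exact ⟨k, by linarith [hk]⟩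

lemma nvec_add_pi (θ : ℝ) : nvec (θ + Real.pi) = -nvec θ := by
  unfold nvec; rw [Real.cos_add_pi, Real.sin_add_pi]; rfl

lemma dot_smul_right (a b : ℝ×ℝ) (ε : ℝ) : dot a (ε • b) = ε * dot a b := by
  simp only [dot, Prod.smul_fst, Prod.smul_snd, smul_eq_mul]; ring

variable {E : Type*} [NormedAddCommGroup E] [NormedSpace ℝ E]

lemma hasDerivAt_affine (a b t : ℝ) : HasDerivAt (fun s : ℝ => a*s + b) a t := by
  simpa using ((hasDerivAt_id t).const_mul a).add_const b

lemma diff_comp_affine {f : ℝ → E} {a : ℝ} {b t : ℝ} (ha : a ≠ 0)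
    (h : DifferentiableAt ℝ (fun s => f (a*s + b)) t) : DifferentiableAt ℝ f (a*t+b) := by
  have h3 : DifferentiableAt ℝ (fun s => f (a*s + b)) ((a*t+b - b)/a) := by
    have hh : (a*t+b-b)/a = t := by field_simp; ring
    rwa [hh]
  have h2 : DifferentiableAt ℝ (fun y : ℝ => f (a*((y-b)/a) + b)) (a*t+b) :=
    DifferentiableAt.comp (g := fun s => f (a*s + b)) (a*t+b) h3 (by fun_prop)
  have he : (fun y : ℝ => f (a*((y-b)/a) + b)) = f := by
    funext y; congr 1; field_simp; ring
  rwa [he] at h2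

lemma deriv_comp_affine (f : ℝ → E) {a : ℝ} (b t : ℝ) (ha : a ≠ 0) :
    deriv (fun s => f (a*s + b)) t = a • deriv f (a*t + b) := by
  by_cases h : DifferentiableAt ℝ f (a*t+b)
  · have := (h.hasDerivAt.scomp t (hasDerivAt_affine a b t)).deriv
    exact this
  · have h' : ¬ DifferentiableAt ℝ (fun s => f (a*s+b)) t := fun hd => h (diff_comp_affine ha hd)
    rw [deriv_zero_of_not_differentiableAt h, deriv_zero_of_not_differentiableAt h', smul_zero]

end Helpers
section Glue

variable {E : Type*}

/-- Concatenation with a pause in the middle. -/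
def glue3 (f : ℝ → E) (v : E) (h : ℝ → E) (t : ℝ) : E :=
  if t ≤ 1/3 then f (3*t) else if t ≤ 2/3 then v else h (3*t - 2)

lemma glue3_eq_left {f : ℝ → E} {v : E} {h : ℝ → E} {t : ℝ} (ht : t ≤ 1/3) :
    glue3 f v h t = f (3*t) := if_pos ht

lemma glue3_eq_mid {f : ℝ → E} {v : E} {h : ℝ → E} {t : ℝ} (ht1 : ¬ t ≤ 1/3) (ht2 : t ≤ 2/3) :
    glue3 f v h t = v := by rw [glue3, if_neg ht1, if_pos ht2]

lemma glue3_eq_right {f : ℝ → E} {v : E} {h : ℝ → E} {t : ℝ} (ht : 2/3 < t) :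
    glue3 f v h t = h (3*t - 2) := by
  rw [glue3, if_neg (by linarith), if_neg (not_le.2 ht)]

lemma glue3_ev_left {f : ℝ → E} {v : E} {h : ℝ → E} {t : ℝ} (ht : t < 1/3) :
    glue3 f v h =ᶠ[nhds t] fun s => f (3*s) :=
  Filter.eventuallyEq_of_mem (Iio_mem_nhds ht) fun s hs => glue3_eq_left (le_of_lt hs)

lemma glue3_ev_mid {f : ℝ → E} {v : E} {h : ℝ → E} {t : ℝ} (ht1 : 1/3 < t) (ht2 : t < 2/3) :
    glue3 f v h =ᶠ[nhds t] fun _ => v :=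
  Filter.eventuallyEq_of_mem (Ioo_mem_nhds ht1 ht2) fun s hs =>
    glue3_eq_mid (not_le.2 hs.1) hs.2.le

lemma glue3_ev_right {f : ℝ → E} {v : E} {h : ℝ → E} {t : ℝ} (ht : 2/3 < t) :
    glue3 f v h =ᶠ[nhds t] fun s => h (3*s - 2) :=
  Filter.eventuallyEq_of_mem (Ioi_mem_nhds ht) fun s hs => glue3_eq_right hs

end Glue

section GlueDeriv

variable {E : Type*} [NormedAddCommGroup E] [NormedSpace ℝ E]
variable {f : ℝ → E} {v : E} {h : ℝ → E}

lemma deriv_glue3_left {t : ℝ} (ht : t < 1/3) :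
    deriv (glue3 f v h) t = (3:ℝ) • deriv f (3*t) := by
  rw [Filter.EventuallyEq.deriv_eq (glue3_ev_left ht)]
  have := deriv_comp_affine f (a := 3) 0 t (by norm_num)
  simpa using this

lemma deriv_glue3_mid {t : ℝ} (ht1 : 1/3 < t) (ht2 : t < 2/3) :
    deriv (glue3 f v h) t = 0 := by
  rw [Filter.EventuallyEq.deriv_eq (glue3_ev_mid ht1 ht2), deriv_const]

lemma deriv_glue3_right {t : ℝ} (ht : 2/3 < t) :
    deriv (glue3 f v h) t = (3:ℝ) • deriv h (3*t - 2) := by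
  rw [Filter.EventuallyEq.deriv_eq (glue3_ev_right ht)]
  have := deriv_comp_affine h (a := 3) (-2) t (by norm_num)
  simp only [sub_eq_add_neg]
  simpa using this

lemma diff_glue3_left {t : ℝ} (ht : t < 1/3)
    (hd : DifferentiableAt ℝ (glue3 f v h) t) : DifferentiableAt ℝ f (3*t) := by
  have hd' : DifferentiableAt ℝ (fun s => f (3*s)) t :=
    ((glue3_ev_left ht).differentiableAt_iff).mp hd
  have := diff_comp_affine (a := 3) (b := 0) (f := f) (by norm_num) (by simpa using hd')
  simpa using this

lemma diff_glue3_right {t : ℝ} (ht : 2/3 < t)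
    (hd : DifferentiableAt ℝ (glue3 f v h) t) : DifferentiableAt ℝ h (3*t - 2) := by
  have hd' : DifferentiableAt ℝ (fun s => h (3*s - 2)) t :=
    ((glue3_ev_right ht).differentiableAt_iff).mp hd
  have := diff_comp_affine (a := 3) (b := -2) (f := h) (by norm_num)
    (by simpa [sub_eq_add_neg] using hd')
  simpa [sub_eq_add_neg] using this

/-- If `glue3` is differentiable at the junction `1/3`, its derivative there vanishes. -/
lemma deriv_glue3_junc1 (hfv : f 1 = v)
    (hd : DifferentiableAt ℝ (glue3 f v h) (1/3)) : deriv (glue3 f v h) (1/3) = 0 := by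
  have hval : glue3 f v h (1/3) = v := by
    rw [glue3_eq_left le_rfl, show (3:ℝ)*(1/3) = 1 by norm_num, hfv]
  have hev : glue3 f v h =ᶠ[nhdsWithin (1/3:ℝ) (Ioi (1/3))] fun _ => v := by
    refine Filter.eventuallyEq_of_mem (Ioo_mem_nhdsGT_of_mem (⟨le_rfl, by norm_num⟩ : (1/3:ℝ) ∈ Ico (1/3) (2/3)))
      fun s hs => ?_
    exact glue3_eq_mid (not_le.2 hs.1) hs.2.le
  have h0 : HasDerivWithinAt (glue3 f v h) 0 (Ioi (1/3)) (1/3) :=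
    (hasDerivWithinAt_const _ _ v).congr_of_eventuallyEq hev hval
  have h1 : HasDerivWithinAt (glue3 f v h) (deriv (glue3 f v h) (1/3)) (Ioi (1/3)) (1/3) :=
    hd.hasDerivAt.hasDerivWithinAt
  exact (uniqueDiffWithinAt_Ioi (1/3:ℝ)).eq_deriv _ h1 h0

/-- If `glue3` is differentiable at the junction `2/3`, its derivative there vanishes. -/
lemma deriv_glue3_junc2 (hhv : h 0 = v)
    (hd : DifferentiableAt ℝ (glue3 f v h) (2/3)) : deriv (glue3 f v h) (2/3) = 0 := by
  have hval : glue3 f v h (2/3) = v := by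
    rw [glue3_eq_mid (by norm_num) le_rfl]
  have hev : glue3 f v h =ᶠ[nhdsWithin (2/3:ℝ) (Iio (2/3))] fun _ => v := by
    refine Filter.eventuallyEq_of_mem (Ioo_mem_nhdsLT_of_mem (a := (1:ℝ)/3) ⟨by norm_num, le_rfl⟩)
      fun s hs => ?_
    exact glue3_eq_mid (not_le.2 hs.1) hs.2.le
  have h0 : HasDerivWithinAt (glue3 f v h) 0 (Iio (2/3)) (2/3) :=
    (hasDerivWithinAt_const _ _ v).congr_of_eventuallyEq hev hval
  have h1 : HasDerivWithinAt (glue3 f v h) (deriv (glue3 f v h) (2/3)) (Iio (2/3)) (2/3) :=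
    hd.hasDerivAt.hasDerivWithinAt
  exact (uniqueDiffWithinAt_Iio (2/3:ℝ)).eq_deriv _ h1 h0

end GlueDeriv
section Translate

/-- The integrand of the length functional. -/
def integrand (ξ : ℝ) (C : Pt → ℝ) (γ : Curve) (t : ℝ) : ℝ :=
  C (γ.x t, nvec (γ.th t)) * Real.sqrt (ξ^2 * γ.u1 t^2 + γ.u3 t^2)

lemma length_eq (ξ : ℝ) (C : Pt → ℝ) (γ : Curve) :
    length ξ C γ = ∫ t in (0:ℝ)..1, integrand ξ C γ t := rfl

lemma integrand_nonneg {C : Pt → ℝ} (hC0 : ∀ q, 0 ≤ C q) (ξ : ℝ) (γ : Curve) (t : ℝ) :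
    0 ≤ integrand ξ C γ t :=
  mul_nonneg (hC0 _) (Real.sqrt_nonneg _)

lemma length_nonneg {C : Pt → ℝ} (hC0 : ∀ q, 0 ≤ C q) (ξ : ℝ) (γ : Curve) :
    0 ≤ length ξ C γ := by
  rw [length_eq]
  exact intervalIntegral.integral_nonneg (by norm_num) fun t _ => integrand_nonneg hC0 ξ γ t

/-- Shift the angular component by a constant. -/
def thShift (γ : Curve) (c : ℝ) : Curve := ⟨γ.x, fun t => γ.th t + c⟩

lemma piecewiseC1_add_const {f : ℝ → ℝ} (hf : PiecewiseC1 f) (c : ℝ) :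
    PiecewiseC1 fun t => f t + c := by
  obtain ⟨h1, s, h2⟩ := hf
  refine ⟨h1.add continuousOn_const, s, fun t ht => ?_⟩
  obtain ⟨hd, hc⟩ := h2 t ht
  refine ⟨hd.add_const c, ?_⟩
  have hder : deriv (fun t => f t + c) = deriv f := by
    funext u; exact deriv_add_const c
  rw [hder]; exact hc

lemma thShift_mem {p q : Pt} {γ : Curve} (hγ : γ ∈ Gamma0 p q) {c ε : ℝ}
    (hε : ε = 1 ∨ ε = -1) (hc : ∀ θ, nvec (θ + c) = ε • nvec θ) :
    thShift γ c ∈ Gamma0 (p.1, ε • p.2) (q.1, ε • q.2) := by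
  obtain ⟨⟨hax, hath⟩, hhor, j1, j2, j3, j4⟩ := hγ
  refine ⟨⟨hax, piecewiseC1_add_const hath c⟩, ?_, j1, j2, ?_, ?_⟩
  · intro t ht hd
    obtain ⟨k, hk⟩ := hhor t ht hd
    refine ⟨k * ε, ?_⟩
    show deriv γ.x t = (k * ε) • nvec (γ.th t + c)
    rw [hc, smul_smul, hk]
    congr 1
    rcases hε with h|h <;> subst h <;> ring
  · show nvec (γ.th 0 + c) = ε • p.2
    rw [hc, j3]
  · show nvec (γ.th 1 + c) = ε • q.2
    rw [hc, j4]

lemma thShift_length {ξ : ℝ} {C : Pt → ℝ} {γ : Curve} {c ε : ℝ}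
    (hε : ε = 1 ∨ ε = -1) (hc : ∀ θ, nvec (θ + c) = ε • nvec θ)
    (hCs : ∀ x n, C (x, ε • n) = C (x, n)) :
    length ξ C (thShift γ c) = length ξ C γ := by
  rw [length_eq, length_eq]
  apply intervalIntegral.integral_congr
  intro t _
  have hε2 : ε^2 = 1 := by rcases hε with h|h <;> subst h <;> norm_num
  have hu1 : (thShift γ c).u1 t = ε * γ.u1 t := by
    show dot (deriv γ.x t) (nvec (γ.th t + c)) = ε * dot (deriv γ.x t) (nvec (γ.th t))
    rw [hc, dot_smul_right]
  have hu3 : (thShift γ c).u3 t = γ.u3 t := by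
    show deriv (fun t => γ.th t + c) t = deriv γ.th t
    exact deriv_add_const c
  show C ((γ.x t), nvec (γ.th t + c)) *
      Real.sqrt (ξ^2 * (thShift γ c).u1 t^2 + (thShift γ c).u3 t^2) = _
  rw [hc, hCs, hu1, hu3, mul_pow, hε2, one_mul]
  rfl

lemma dF0_le_translate (ξ : ℝ) (C : Pt → ℝ) (p q : Pt) {c ε : ℝ}
    (hε : ε = 1 ∨ ε = -1) (hc : ∀ θ, nvec (θ + c) = ε • nvec θ)
    (hCs : ∀ x n, C (x, ε • n) = C (x, n)) :
    dF0 ξ C (p.1, ε • p.2) (q.1, ε • q.2) ≤ dF0 ξ C p q := by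
  refine le_iInf fun γ => le_iInf fun hγ => ?_
  calc dF0 ξ C (p.1, ε • p.2) (q.1, ε • q.2)
      ≤ ENNReal.ofReal (length ξ C (thShift γ c)) :=
        iInf_le_of_le (thShift γ c) (iInf_le_of_le (thShift_mem hγ hε hc) le_rfl)
    _ = ENNReal.ofReal (length ξ C γ) := by rw [thShift_length hε hc hCs]

lemma antipode_antipode (p : Pt) : antipode (antipode p) = p := by simp [antipode]

lemma dF0_antipode (ξ : ℝ) {C : Pt → ℝ} (hsym : AntipodallySymmetric C) (p q : Pt) :
    dF0 ξ C (antipode p) (antipode q) = dF0 ξ C p q := by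
  have hc : ∀ θ : ℝ, nvec (θ + Real.pi) = (-1:ℝ) • nvec θ := by
    intro θ; rw [nvec_add_pi, neg_one_smul]
  have hCs : ∀ x n : ℝ × ℝ, C (x, (-1:ℝ) • n) = C (x, n) := by
    intro x n; rw [neg_one_smul]; exact (hsym x n).symm
  have key : ∀ p q : Pt, dF0 ξ C (antipode p) (antipode q) ≤ dF0 ξ C p q := by
    intro p q
    have h := dF0_le_translate ξ C p q (Or.inr rfl) hc hCs
    simpa [antipode, neg_one_smul] using h
  refine le_antisymm (key p q) ?_
  have := key (antipode p) (antipode q)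
  rwa [antipode_antipode, antipode_antipode] at this

end Translate
section GluePC1

variable {E : Type*} [NormedAddCommGroup E] [NormedSpace ℝ E]

lemma glue3_continuousOn {f h : ℝ → E} {v : E}
    (hf : ContinuousOn f (Icc 0 1)) (hh : ContinuousOn h (Icc 0 1))
    (hfv : f 1 = v) (hhv : h 0 = v) :
    ContinuousOn (glue3 f v h) (Icc 0 1) := by
  have c1 : ContinuousOn (glue3 f v h) (Icc 0 (1/3)) := by
    have hcomp : ContinuousOn (fun s : ℝ => f (3*s)) (Icc 0 (1/3)) := by
      refine hf.comp ((continuous_const.mul continuous_id).continuousOn) ?_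
      intro s hs
      exact ⟨by simpa using by linarith [hs.1], by simpa using by linarith [hs.2]⟩
    exact hcomp.congr fun s hs => glue3_eq_left hs.2
  have c2 : ContinuousOn (glue3 f v h) (Icc (1/3) (2/3)) := by
    refine (continuousOn_const (c := v)).congr fun s hs => ?_
    rcases le_or_gt s (1/3) with h1|h1
    · have hs13 : s = 1/3 := le_antisymm h1 hs.1
      rw [glue3_eq_left h1, hs13, show (3:ℝ)*(1/3) = 1 by norm_num, hfv]
    · exact glue3_eq_mid (not_le.2 h1) hs.2
  have c3 : ContinuousOn (glue3 f v h) (Icc (2/3) 1) := by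
    have hcomp : ContinuousOn (fun s : ℝ => h (3*s - 2)) (Icc (2/3) 1) := by
      refine hh.comp (((continuous_const.mul continuous_id).sub continuous_const).continuousOn) ?_
      intro s hs
      exact ⟨by simpa using by linarith [hs.1], by simpa using by linarith [hs.2]⟩
    refine hcomp.congr fun s hs => ?_
    rcases eq_or_lt_of_le hs.1 with h1|h1
    · rw [glue3_eq_mid (by rw [← h1]; norm_num) (by rw [← h1]), ← h1]
      beta_reduce
      rw [show (3:ℝ)*(2/3) - 2 = 0 by norm_num, hhv]
    · exact glue3_eq_right h1
  intro t _
  have aux : ∀ s : Set ℝ, IsClosed s → ContinuousOn (glue3 f v h) s →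
      ContinuousWithinAt (glue3 f v h) s t := by
    intro s hs hcont
    by_cases hts : t ∈ s
    · exact hcont t hts
    · exact continuousWithinAt_of_notMem_closure (by rwa [hs.closure_eq])
  refine ContinuousWithinAt.mono
    ((aux _ isClosed_Icc c1).union ((aux _ isClosed_Icc c2).union (aux _ isClosed_Icc c3))) ?_
  intro s hs
  rcases le_or_gt s (1/3) with h1|h1
  · exact Or.inl ⟨hs.1, h1⟩
  · rcases le_or_gt s (2/3) with h2|h2
    · exact Or.inr (Or.inl ⟨h1.le, h2⟩)
    · exact Or.inr (Or.inr ⟨h2.le, hs.2⟩)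

lemma glue3_piecewiseC1 {f h : ℝ → E} {v : E}
    (hf : PiecewiseC1 f) (hh : PiecewiseC1 h) (hfv : f 1 = v) (hhv : h 0 = v) :
    PiecewiseC1 (glue3 f v h) := by
  obtain ⟨hfc, sf, hsf⟩ := hf
  obtain ⟨hhc, sh, hsh⟩ := hh
  refine ⟨glue3_continuousOn hfc hhc hfv hhv,
    insert (1/3 : ℝ) (insert (2/3 : ℝ)
      (sf.image (fun u => u/3) ∪ sh.image (fun u => (u+2)/3))), fun t ht => ?_⟩
  obtain ⟨ht01, hts⟩ := ht
  have hmem : ¬ (t = 1/3 ∨ t = 2/3 ∨ (∃ u ∈ sf, u/3 = t) ∨ (∃ u ∈ sh, (u+2)/3 = t)) := by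
    intro hc
    apply hts
    simp only [Finset.coe_insert, Finset.coe_union, Finset.coe_image,
      Set.mem_insert_iff, Set.mem_union, Set.mem_image, Finset.mem_coe]
    tauto
  push_neg at hmem
  obtain ⟨h13, h23, hfS, hhS⟩ := hmem
  rcases lt_trichotomy t (1/3) with hlt|heq|hgt
  · have h3t : (3*t) ∈ Icc (0:ℝ) 1 \ (sf : Set ℝ) := by
      refine ⟨⟨by linarith [ht01.1], by linarith⟩, fun hc => ?_⟩
      exact absurd (by ring : (3*t)/3 = t) (hfS (3*t) hc)
    obtain ⟨hdf, hcf⟩ := hsf (3*t) h3t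
    constructor
    · refine ((glue3_ev_left hlt).differentiableAt_iff).mpr ?_
      exact hdf.comp t ((differentiableAt_id).const_mul 3)
    · have hev : deriv (glue3 f v h) =ᶠ[nhds t] fun s => (3:ℝ) • deriv f (3*s) :=
        Filter.eventuallyEq_of_mem (Iio_mem_nhds hlt) fun s hs => deriv_glue3_left hs
      have hca : ContinuousAt (fun s : ℝ => (3:ℝ) • deriv f (3*s)) t :=
        (hcf.comp ((continuous_const.mul continuous_id).continuousAt)).const_smul 3
      exact hca.congr hev.symm
  · exact absurd heq h13
  · rcases lt_trichotomy t (2/3) with hlt2|heq2|hgt2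
    · constructor
      · exact ((glue3_ev_mid hgt hlt2).differentiableAt_iff).mpr (differentiableAt_const v)
      · have hev : deriv (glue3 f v h) =ᶠ[nhds t] fun _ => (0:E) :=
          Filter.eventuallyEq_of_mem (Ioo_mem_nhds hgt hlt2) fun s hs =>
            deriv_glue3_mid hs.1 hs.2
        exact continuousAt_const.congr hev.symm
    · exact absurd heq2 h23
    · have h3t : (3*t - 2) ∈ Icc (0:ℝ) 1 \ (sh : Set ℝ) := by
        refine ⟨⟨by linarith, by linarith [ht01.2]⟩, fun hc => ?_⟩
        exact absurd (by ring : ((3*t - 2)+2)/3 = t) (hhS (3*t - 2) hc)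
      obtain ⟨hdh, hch⟩ := hsh (3*t - 2) h3t
      constructor
      · refine ((glue3_ev_right hgt2).differentiableAt_iff).mpr ?_
        exact hdh.comp t (((differentiableAt_id).const_mul 3).sub_const 2)
      · have hev : deriv (glue3 f v h) =ᶠ[nhds t] fun s => (3:ℝ) • deriv h (3*s - 2) :=
          Filter.eventuallyEq_of_mem (Ioi_mem_nhds hgt2) fun s hs => deriv_glue3_right hs
        have hca : ContinuousAt (fun s : ℝ => (3:ℝ) • deriv h (3*s - 2)) t := by
          have hc2 : ContinuousAt (fun s : ℝ => deriv h (3*s - 2)) t :=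
            hch.comp (f := fun s : ℝ => 3*s - 2) (by fun_prop)
          exact hc2.const_smul (3:ℝ)
        exact hca.congr hev.symm

end GluePC1
section ConcatCurve

lemma dot_smul_left (a b : ℝ×ℝ) (ε : ℝ) : dot (ε • a) b = ε * dot a b := by
  simp only [dot, Prod.smul_fst, Prod.smul_snd, smul_eq_mul]; ring

lemma dot_zero_left (b : ℝ×ℝ) : dot 0 b = 0 := by simp [dot]

/-- The concatenated curve. -/
def cat (γ σ : Curve) (v : ℝ×ℝ) : Curve :=
  ⟨glue3 γ.x v σ.x, glue3 γ.th (γ.th 1) σ.th⟩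

lemma cat_mem {a m b : Pt} {γ σ : Curve}
    (hγ : γ ∈ Gamma0 a m) (hσ : σ ∈ Gamma0 m b) (hth : σ.th 0 = γ.th 1) :
    cat γ σ m.1 ∈ Gamma0 a b := by
  obtain ⟨⟨hγx, hγth⟩, hγhor, jγ1, jγ2, jγ3, jγ4⟩ := hγ
  obtain ⟨⟨hσx, hσth⟩, hσhor, jσ1, jσ2, jσ3, jσ4⟩ := hσ
  refine ⟨⟨glue3_piecewiseC1 hγx hσx jγ2 jσ1,
    glue3_piecewiseC1 hγth hσth rfl hth⟩, ?_, ?_, ?_, ?_, ?_⟩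
  · -- Horizontal
    intro t ht hd
    rcases lt_trichotomy t (1/3) with hlt|heq|hgt
    · have hdf := diff_glue3_left hlt hd
      obtain ⟨c, hc⟩ := hγhor (3*t) ⟨by linarith [ht.1], by linarith⟩ hdf
      refine ⟨3*c, ?_⟩
      show deriv (glue3 γ.x m.1 σ.x) t = (3*c) • nvec (glue3 γ.th (γ.th 1) σ.th t)
      rw [deriv_glue3_left hlt, glue3_eq_left hlt.le, hc, smul_smul]
    · refine ⟨0, ?_⟩
      show deriv (glue3 γ.x m.1 σ.x) t = (0:ℝ) • _
      rw [heq, deriv_glue3_junc1 jγ2 (heq ▸ hd), zero_smul]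
    · rcases lt_trichotomy t (2/3) with hlt2|heq2|hgt2
      · refine ⟨0, ?_⟩
        show deriv (glue3 γ.x m.1 σ.x) t = (0:ℝ) • _
        rw [deriv_glue3_mid hgt hlt2, zero_smul]
      · refine ⟨0, ?_⟩
        show deriv (glue3 γ.x m.1 σ.x) t = (0:ℝ) • _
        rw [heq2, deriv_glue3_junc2 jσ1 (heq2 ▸ hd), zero_smul]
      · have hdh := diff_glue3_right hgt2 hd
        obtain ⟨c, hc⟩ := hσhor (3*t - 2) ⟨by linarith, by linarith [ht.2]⟩ hdh
        refine ⟨3*c, ?_⟩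
        show deriv (glue3 γ.x m.1 σ.x) t = (3*c) • nvec (glue3 γ.th (γ.th 1) σ.th t)
        rw [deriv_glue3_right hgt2, glue3_eq_right hgt2, hc, smul_smul]
  · show glue3 γ.x m.1 σ.x 0 = a.1
    rw [glue3_eq_left (by norm_num : (0:ℝ) ≤ 1/3), show (3:ℝ)*0 = 0 by norm_num, jγ1]
  · show glue3 γ.x m.1 σ.x 1 = b.1
    rw [glue3_eq_right (by norm_num : (2:ℝ)/3 < 1), show (3:ℝ)*1 - 2 = 1 by norm_num, jσ2]
  · show nvec (glue3 γ.th (γ.th 1) σ.th 0) = a.2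
    rw [glue3_eq_left (by norm_num : (0:ℝ) ≤ 1/3), show (3:ℝ)*0 = 0 by norm_num, jγ3]
  · show nvec (glue3 γ.th (γ.th 1) σ.th 1) = b.2
    rw [glue3_eq_right (by norm_num : (2:ℝ)/3 < 1), show (3:ℝ)*1 - 2 = 1 by norm_num, jσ4]

lemma integrand_cat_left (ξ : ℝ) (C : Pt → ℝ) (γ σ : Curve) (v : ℝ×ℝ) {t : ℝ}
    (ht : t < 1/3) : integrand ξ C (cat γ σ v) t = 3 * integrand ξ C γ (3*t) := by
  have hx : (cat γ σ v).x t = γ.x (3*t) := glue3_eq_left ht.le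
  have hth : (cat γ σ v).th t = γ.th (3*t) := glue3_eq_left ht.le
  have hu1 : (cat γ σ v).u1 t = 3 * γ.u1 (3*t) := by
    show dot (deriv (glue3 γ.x v σ.x) t) (nvec ((cat γ σ v).th t)) = _
    rw [hth, deriv_glue3_left ht, dot_smul_left]
    rfl
  have hu3 : (cat γ σ v).u3 t = 3 * γ.u3 (3*t) := by
    show deriv (glue3 γ.th (γ.th 1) σ.th) t = _
    rw [deriv_glue3_left ht, smul_eq_mul]
    rfl
  unfold integrand
  rw [hx, hth, hu1, hu3,
    show ξ^2 * (3 * γ.u1 (3*t))^2 + (3 * γ.u3 (3*t))^2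
      = 9 * (ξ^2 * γ.u1 (3*t)^2 + γ.u3 (3*t)^2) by ring,
    Real.sqrt_mul (by norm_num : (0:ℝ) ≤ 9), sqrt_nine]
  ring

lemma integrand_cat_mid (ξ : ℝ) (C : Pt → ℝ) (γ σ : Curve) (v : ℝ×ℝ) {t : ℝ}
    (ht1 : 1/3 < t) (ht2 : t < 2/3) : integrand ξ C (cat γ σ v) t = 0 := by
  have hu1 : (cat γ σ v).u1 t = 0 := by
    show dot (deriv (glue3 γ.x v σ.x) t) _ = 0
    rw [deriv_glue3_mid ht1 ht2, dot_zero_left]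
  have hu3 : (cat γ σ v).u3 t = 0 := by
    show deriv (glue3 γ.th (γ.th 1) σ.th) t = 0
    rw [deriv_glue3_mid ht1 ht2]
  unfold integrand
  rw [hu1, hu3]
  norm_num

lemma integrand_cat_right (ξ : ℝ) (C : Pt → ℝ) (γ σ : Curve) (v : ℝ×ℝ) {t : ℝ}
    (ht : 2/3 < t) : integrand ξ C (cat γ σ v) t = 3 * integrand ξ C σ (3*t - 2) := by
  have hx : (cat γ σ v).x t = σ.x (3*t - 2) := glue3_eq_right ht
  have hth : (cat γ σ v).th t = σ.th (3*t - 2) := glue3_eq_right ht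
  have hu1 : (cat γ σ v).u1 t = 3 * σ.u1 (3*t - 2) := by
    show dot (deriv (glue3 γ.x v σ.x) t) (nvec ((cat γ σ v).th t)) = _
    rw [hth, deriv_glue3_right ht, dot_smul_left]
    rfl
  have hu3 : (cat γ σ v).u3 t = 3 * σ.u3 (3*t - 2) := by
    show deriv (glue3 γ.th (γ.th 1) σ.th) t = _
    rw [deriv_glue3_right ht, smul_eq_mul]
    rfl
  unfold integrand
  rw [hx, hth, hu1, hu3,
    show ξ^2 * (3 * σ.u1 (3*t - 2))^2 + (3 * σ.u3 (3*t - 2))^2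
      = 9 * (ξ^2 * σ.u1 (3*t - 2)^2 + σ.u3 (3*t - 2)^2) by ring,
    Real.sqrt_mul (by norm_num : (0:ℝ) ≤ 9), sqrt_nine]
  ring

end ConcatCurve
section Triangle

lemma uIcc_subset01 {u w : ℝ} (h0 : 0 ≤ u) (huw : u ≤ w) (h1 : w ≤ 1) :
    Set.uIcc u w ⊆ Set.uIcc (0:ℝ) 1 := by
  rw [Set.uIcc_of_le huw, Set.uIcc_of_le (by norm_num : (0:ℝ) ≤ 1)]
  exact Set.Icc_subset_Icc h0 h1

lemma cat_length_le {ξ : ℝ} {C : Pt → ℝ} (hC0 : ∀ q, 0 ≤ C q) {a m b : Pt} {γ σ : Curve}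
    (hγ : γ ∈ Gamma0 a m) (hσ : σ ∈ Gamma0 m b) (hth : σ.th 0 = γ.th 1) :
    ENNReal.ofReal (length ξ C (cat γ σ m.1)) ≤
      ENNReal.ofReal (length ξ C γ) + ENNReal.ofReal (length ξ C σ) := by
  set τ := cat γ σ m.1 with hτ
  by_cases hint : IntervalIntegrable (integrand ξ C τ) volume 0 1
  · have h1 : IntervalIntegrable (integrand ξ C τ) volume 0 (1/3) :=
      hint.mono_set (uIcc_subset01 le_rfl (by norm_num) (by norm_num))
    have h2 : IntervalIntegrable (integrand ξ C τ) volume (1/3) (2/3) :=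
      hint.mono_set (uIcc_subset01 (by norm_num) (by norm_num) (by norm_num))
    have h3 : IntervalIntegrable (integrand ξ C τ) volume (2/3) 1 :=
      hint.mono_set (uIcc_subset01 (by norm_num) (by norm_num) le_rfl)
    have e1 : ∫ t in (0:ℝ)..(1/3), integrand ξ C τ t = length ξ C γ := by
      have hae : ∀ᵐ (x:ℝ) ∂volume, x ∈ Set.uIoc (0:ℝ) (1/3) →
          integrand ξ C τ x = 3 * integrand ξ C γ (3*x) := by
        have hne : ∀ᵐ (x:ℝ) ∂volume, x ∉ ({1/3} : Set ℝ) :=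
          measure_eq_zero_iff_ae_notMem.mp Real.volume_singleton
        filter_upwards [hne] with x hx hxmem
        rw [Set.uIoc_of_le (by norm_num : (0:ℝ) ≤ 1/3)] at hxmem
        have hxlt : x < 1/3 := lt_of_le_of_ne hxmem.2 (by simpa using hx)
        exact integrand_cat_left ξ C γ σ m.1 hxlt
      rw [intervalIntegral.integral_congr_ae hae, intervalIntegral.integral_const_mul,
        intervalIntegral.integral_comp_mul_left (fun s => integrand ξ C γ s)
          (by norm_num : (3:ℝ) ≠ 0)]
      rw [length_eq, smul_eq_mul, ← mul_assoc]
      norm_num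
    have e2 : ∫ t in (1/3:ℝ)..(2/3), integrand ξ C τ t = 0 := by
      have hae : ∀ᵐ (x:ℝ) ∂volume, x ∈ Set.uIoc (1/3:ℝ) (2/3) →
          integrand ξ C τ x = (fun _ : ℝ => (0:ℝ)) x := by
        have hne : ∀ᵐ (x:ℝ) ∂volume, x ∉ ({2/3} : Set ℝ) :=
          measure_eq_zero_iff_ae_notMem.mp Real.volume_singleton
        filter_upwards [hne] with x hx hxmem
        rw [Set.uIoc_of_le (by norm_num : (1/3:ℝ) ≤ 2/3)] at hxmem
        have hxlt : x < 2/3 := lt_of_le_of_ne hxmem.2 (by simpa using hx)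
        exact integrand_cat_mid ξ C γ σ m.1 hxmem.1 hxlt
      rw [intervalIntegral.integral_congr_ae hae, intervalIntegral.integral_zero]
    have e3 : ∫ t in (2/3:ℝ)..1, integrand ξ C τ t = length ξ C σ := by
      have hae : ∀ᵐ (x:ℝ) ∂volume, x ∈ Set.uIoc (2/3:ℝ) 1 →
          integrand ξ C τ x = 3 * integrand ξ C σ (3*x - 2) := by
        refine Filter.Eventually.of_forall fun x hxmem => ?_
        rw [Set.uIoc_of_le (by norm_num : (2/3:ℝ) ≤ 1)] at hxmem
        exact integrand_cat_right ξ C γ σ m.1 hxmem.1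
      rw [intervalIntegral.integral_congr_ae hae, intervalIntegral.integral_const_mul,
        intervalIntegral.integral_comp_mul_sub (fun s => integrand ξ C σ s)
          (by norm_num : (3:ℝ) ≠ 0) 2]
      rw [length_eq, smul_eq_mul, ← mul_assoc]
      norm_num
    have hadd1 := intervalIntegral.integral_add_adjacent_intervals h1 h2
    have hadd2 := intervalIntegral.integral_add_adjacent_intervals (h1.trans h2) h3
    have hlen : length ξ C τ = length ξ C γ + length ξ C σ := by
      rw [length_eq, ← hadd2, ← hadd1, e1, e2, e3, add_zero]
    rw [hlen, ENNReal.ofReal_add (length_nonneg hC0 ξ γ) (length_nonneg hC0 ξ σ)]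
  · rw [length_eq, intervalIntegral.integral_undef hint]
    simp

lemma dF0_triangle (ξ : ℝ) {C : Pt → ℝ} (hC0 : ∀ q, 0 ≤ C q) (a m b : Pt) :
    dF0 ξ C a b ≤ dF0 ξ C a m + dF0 ξ C m b := by
  rw [show dF0 ξ C a m + dF0 ξ C m b = ⨅ γ ∈ Gamma0 a m, ⨅ σ ∈ Gamma0 m b,
      (ENNReal.ofReal (length ξ C γ) + ENNReal.ofReal (length ξ C σ)) from by
    simp_rw [dF0, ENNReal.iInf_add, ENNReal.add_iInf]]
  refine le_iInf fun γ => le_iInf fun hγ => le_iInf fun σ => le_iInf fun hσ => ?_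
  -- shift σ so the angles match at the junction
  have hnv : nvec (γ.th 1) = nvec (σ.th 0) := by
    rw [hγ.2.2.2.2.2, hσ.2.2.2.2.1]
  obtain ⟨k, hk⟩ := nvec_eq_iff hnv
  have hc : ∀ θ : ℝ, nvec (θ + 2*Real.pi*k) = (1:ℝ) • nvec θ := by
    intro θ; rw [nvec_add_int, one_smul]
  have hCs : ∀ (x n : ℝ × ℝ), C (x, (1:ℝ) • n) = C (x, n) := by
    intro x n; rw [one_smul]
  have hσ' : thShift σ (2*Real.pi*k) ∈ Gamma0 m b := by
    have := thShift_mem hσ (Or.inl rfl) hc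
    simpa using this
  have hth : (thShift σ (2*Real.pi*k)).th 0 = γ.th 1 := by
    show σ.th 0 + 2*Real.pi*k = γ.th 1
    linarith [hk]
  calc dF0 ξ C a b ≤ ENNReal.ofReal (length ξ C (cat γ (thShift σ (2*Real.pi*k)) m.1)) :=
        iInf_le_of_le _ (iInf_le_of_le (cat_mem hγ hσ' hth) le_rfl)
    _ ≤ ENNReal.ofReal (length ξ C γ)
          + ENNReal.ofReal (length ξ C (thShift σ (2*Real.pi*k))) :=
        cat_length_le hC0 hγ hσ' hth
    _ = ENNReal.ofReal (length ξ C γ) + ENNReal.ofReal (length ξ C σ) := by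
        rw [thShift_length (Or.inl rfl) hc hCs]

lemma dproj_le_dF0 (ξ : ℝ) (C : Pt → ℝ) (p q q₀ q₁ : Pt)
    (h0 : q₀ = p ∨ q₀ = antipode p) (h1 : q₁ = q ∨ q₁ = antipode q) :
    dproj ξ C p q ≤ dF0 ξ C q₀ q₁ := by
  rcases h0 with h|h <;> rcases h1 with h'|h' <;> subst h <;> subst h' <;> unfold dproj
  · exact min_le_of_left_le (min_le_left _ _)
  · exact min_le_of_left_le (min_le_right _ _)
  · exact min_le_of_right_le (min_le_left _ _)
  · exact min_le_of_right_le (min_le_right _ _)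

lemma dproj_cases (ξ : ℝ) (C : Pt → ℝ) (p q : Pt) :
    ∃ q₀ q₁ : Pt, (q₀ = p ∨ q₀ = antipode p) ∧ (q₁ = q ∨ q₁ = antipode q) ∧
      dproj ξ C p q = dF0 ξ C q₀ q₁ := by
  unfold dproj
  rcases min_cases (min (dF0 ξ C p q) (dF0 ξ C p (antipode q)))
      (min (dF0 ξ C (antipode p) q) (dF0 ξ C (antipode p) (antipode q))) with ⟨h1,-⟩|⟨h1,-⟩ <;>
    rw [h1]
  · rcases min_cases (dF0 ξ C p q) (dF0 ξ C p (antipode q)) with ⟨h2,-⟩|⟨h2,-⟩ <;> rw [h2]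
    · exact ⟨p, q, Or.inl rfl, Or.inl rfl, rfl⟩
    · exact ⟨p, antipode q, Or.inl rfl, Or.inr rfl, rfl⟩
  · rcases min_cases (dF0 ξ C (antipode p) q) (dF0 ξ C (antipode p) (antipode q))
        with ⟨h2,-⟩|⟨h2,-⟩ <;> rw [h2]
    · exact ⟨antipode p, q, Or.inr rfl, Or.inl rfl, rfl⟩
    · exact ⟨antipode p, antipode q, Or.inr rfl, Or.inr rfl, rfl⟩

end Triangle
/-- triangle inequality for `d_proj`. -/
theorem dproj_triangle (ξ δ : ℝ) (hξ : 0 < ξ) (hδ : 0 < δ)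
    (C : Pt → ℝ) (hC : Continuous C) (hCδ : ∀ q, δ ≤ C q)
    (hsym : AntipodallySymmetric C) (p₀ p₁ p₂ : Pt) :
    dproj ξ C p₀ p₁ ≤ dproj ξ C p₀ p₂ + dproj ξ C p₂ p₁ := by
  have hC0 : ∀ q, 0 ≤ C q := fun q => le_trans hδ.le (hCδ q)
  obtain ⟨q₀, q₂, h0, h2, e02⟩ := dproj_cases ξ C p₀ p₂
  obtain ⟨q₂', q₁, h2', h1, e21⟩ := dproj_cases ξ C p₂ p₁
  rw [e02, e21]
  have hmid : q₂' = q₂ ∨ q₂' = antipode q₂ := by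
    rcases h2 with h|h <;> rcases h2' with h'|h' <;> subst h <;> subst h'
    · exact Or.inl rfl
    · exact Or.inr rfl
    · exact Or.inr (antipode_antipode _).symm
    · exact Or.inl rfl
  rcases hmid with he|he
  · subst he
    calc dproj ξ C p₀ p₁ ≤ dF0 ξ C q₀ q₁ := dproj_le_dF0 ξ C p₀ p₁ q₀ q₁ h0 h1
      _ ≤ dF0 ξ C q₀ q₂' + dF0 ξ C q₂' q₁ := dF0_triangle ξ hC0 q₀ q₂' q₁
  · have hrw : dF0 ξ C q₂' q₁ = dF0 ξ C q₂ (antipode q₁) := by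
      rw [← dF0_antipode ξ hsym q₂' q₁, he, antipode_antipode]
    rw [hrw]
    have h1' : antipode q₁ = p₁ ∨ antipode q₁ = antipode p₁ := by
      rcases h1 with h|h <;> subst h
      · exact Or.inr rfl
      · exact Or.inl (antipode_antipode p₁)
    calc dproj ξ C p₀ p₁ ≤ dF0 ξ C q₀ (antipode q₁) :=
          dproj_le_dF0 ξ C p₀ p₁ q₀ (antipode q₁) h0 h1'
      _ ≤ dF0 ξ C q₀ q₂ + dF0 ξ C q₂ (antipode q₁) := dF0_triangle ξ hC0 q₀ q₂ (antipode q₁)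

end
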